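/- For every integer n ≥ 1 and every real x, the finite sum ∑_{k=0}^{⌊x−1⌋} ∫₀^∞ ((−λ)^k / k!) · J_n(λ) dλ is nonnegative (the empty sum, occurring when x < 1, being 0). -/

import Mathlib

open MeasureTheory

/-- J_n(λ) = n·(√λ − (n−1)/n) for ((n−1)/n)² ≤ λ ≤ 1, and 0 otherwise. -/
noncomputable def Jfun (n : ℕ) (l : ℝ) : ℝ :=
  if (((n : ℝ) - 1) / n) ^ 2 ≤ l ∧ l ≤ 1 then
    (n : ℝ) * (Real.sqrt l - ((n : ℝ) - 1) / n)
  else 0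

lemma cfrac_nonneg (n : ℕ) (hn : 1 ≤ n) : 0 ≤ ((n : ℝ) - 1) / n := by
  have h1 : (1 : ℝ) ≤ n := by exact_mod_cast hn
  have h0 : (0 : ℝ) < n := by linarith
  have : (0 : ℝ) ≤ (n : ℝ) - 1 := by linarith
  positivity

lemma Jfun_nonneg (n : ℕ) (hn : 1 ≤ n) (l : ℝ) : 0 ≤ Jfun n l := by
  unfold Jfun
  split_ifs with h
  · have hc := cfrac_nonneg n hn
    have hsq : ((n : ℝ) - 1) / n ≤ Real.sqrt l := by
      have := Real.sqrt_le_sqrt h.1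
      rwa [Real.sqrt_sq hc] at this
    have hn0 : (0 : ℝ) ≤ n := by positivity
    nlinarith
  · exact le_refl 0

lemma Jfun_le (n : ℕ) (hn : 1 ≤ n) (l : ℝ) : Jfun n l ≤ n := by
  unfold Jfun
  split_ifs with h
  · have hc := cfrac_nonneg n hn
    have hs : Real.sqrt l ≤ 1 := by
      rw [show (1:ℝ) = Real.sqrt 1 by simp]
      exact Real.sqrt_le_sqrt h.2
    have hn0 : (0 : ℝ) ≤ n := by positivity
    nlinarith
  · positivity

lemma Jfun_measurable (n : ℕ) : Measurable (Jfun n) := by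
  unfold Jfun
  exact Measurable.ite measurableSet_Icc (by fun_prop) measurable_const

lemma term_integrable (n : ℕ) (hn : 1 ≤ n) (k : ℕ) :
    IntegrableOn (fun l : ℝ => ((-l) ^ k / (Nat.factorial k : ℝ)) * Jfun n l)
      (Set.Ioi (0 : ℝ)) := by
  have hmeas : AEStronglyMeasurable
      (fun l : ℝ => ((-l) ^ k / (Nat.factorial k : ℝ)) * Jfun n l)
      (volume.restrict (Set.Ioi (0:ℝ))) := by
    apply Measurable.aestronglyMeasurable
    exact (((measurable_id.neg.pow_const k).div_const _).mul (Jfun_measurable n))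
  refine Integrable.mono' (g := (Set.Icc (0:ℝ) 1).indicator (fun _ => (n : ℝ)))
    ?_ hmeas ?_
  · exact (((integrable_indicator_iff measurableSet_Icc).2
      (integrableOn_const measure_Icc_lt_top.ne))).restrict
  · rw [ae_restrict_iff' measurableSet_Ioi]
    filter_upwards with l hl
    by_cases h1 : l ≤ 1
    · have hl0 : (0:ℝ) < l := hl
      have hmem : l ∈ Set.Icc (0:ℝ) 1 := ⟨le_of_lt hl0, h1⟩
      rw [Set.indicator_of_mem hmem]
      have hJ0 := Jfun_nonneg n hn l
      have hJn := Jfun_le n hn l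
      have hpow : |(-l) ^ k / (Nat.factorial k : ℝ)| ≤ 1 := by
        rw [abs_div, abs_pow, abs_neg, abs_of_pos hl0,
          abs_of_pos (by positivity : (0:ℝ) < (Nat.factorial k : ℝ))]
        have h1' : l ^ k ≤ 1 := pow_le_one₀ (le_of_lt hl0) h1
        have h2 : (1:ℝ) ≤ (Nat.factorial k : ℝ) := by
          exact_mod_cast Nat.one_le_iff_ne_zero.2 (Nat.factorial_ne_zero k)
        calc l ^ k / (Nat.factorial k : ℝ) ≤ 1 / 1 :=
              div_le_div₀ (by norm_num) h1' (by norm_num) h2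
          _ = 1 := by norm_num
      rw [norm_mul]
      calc ‖(-l) ^ k / (Nat.factorial k : ℝ)‖ * ‖Jfun n l‖
          ≤ 1 * (n : ℝ) := by
            apply mul_le_mul hpow _ (norm_nonneg _) (by norm_num)
            rw [Real.norm_eq_abs, abs_of_nonneg hJ0]; exact hJn
        _ = (n : ℝ) := one_mul _
    · have hJ : Jfun n l = 0 := by
        unfold Jfun
        rw [if_neg]
        rintro ⟨-, h⟩; exact h1 h
      rw [hJ, mul_zero, norm_zero]
      exact Set.indicator_nonneg (fun _ _ => by positivity) l

lemma psum_even (l : ℝ) (h0 : 0 ≤ l) (h1 : l ≤ 1) (j : ℕ) :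
    0 ≤ ∑ k ∈ Finset.range (2 * j), (-l) ^ k / (Nat.factorial k : ℝ) := by
  induction j with
  | zero => simp
  | succ j ih =>
    have hrange : 2 * (j + 1) = (2 * j) + 1 + 1 := by ring
    rw [hrange, Finset.sum_range_succ, Finset.sum_range_succ]
    have he : (-l) ^ (2 * j) = l ^ (2 * j) := (even_two_mul j).neg_pow l
    have ho : (-l) ^ (2 * j + 1) = -(l ^ (2 * j + 1)) :=
      (Odd.neg_pow (odd_two_mul_add_one j)) l
    rw [he, ho, neg_div]
    have hkey : l ^ (2 * j + 1) / (Nat.factorial (2 * j + 1) : ℝ)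
        ≤ l ^ (2 * j) / (Nat.factorial (2 * j) : ℝ) := by
      apply div_le_div₀ (pow_nonneg h0 _)
        (pow_le_pow_of_le_one h0 h1 (Nat.le_succ _))
        (by exact_mod_cast Nat.factorial_pos (2 * j))
        (by exact_mod_cast Nat.factorial_le (Nat.le_succ (2 * j)))
    linarith

lemma psum_nonneg (l : ℝ) (h0 : 0 ≤ l) (h1 : l ≤ 1) (m : ℕ) :
    0 ≤ ∑ k ∈ Finset.range m, (-l) ^ k / (Nat.factorial k : ℝ) := by
  rcases Nat.even_or_odd m with ⟨j, hj⟩ | ⟨j, hj⟩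
  · have : m = 2 * j := by omega
    rw [this]; exact psum_even l h0 h1 j
  · have : m = 2 * j + 1 := by omega
    rw [this, Finset.sum_range_succ]
    have he : (-l) ^ (2 * j) = l ^ (2 * j) := (even_two_mul j).neg_pow l
    have hpos : 0 ≤ l ^ (2 * j) / (Nat.factorial (2 * j) : ℝ) := by positivity
    have := psum_even l h0 h1 j
    rw [he]; linarith

theorem sum_integral_nonneg (n : ℕ) (hn : 1 ≤ n) (x : ℝ) :
    0 ≤ ∑ k ∈ Finset.range (Int.toNat (⌊x - 1⌋ + 1)),
        ∫ l in Set.Ioi (0 : ℝ), ((-l) ^ k / (Nat.factorial k : ℝ)) * Jfun n l := by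
  set m := Int.toNat (⌊x - 1⌋ + 1) with hm
  rw [← MeasureTheory.integral_finset_sum _
    (fun k _ => term_integrable n hn k)]
  apply setIntegral_nonneg measurableSet_Ioi
  intro l hl
  have hl0 : (0:ℝ) < l := hl
  by_cases h1 : l ≤ 1
  · rw [← Finset.sum_mul]
    exact mul_nonneg (psum_nonneg l (le_of_lt hl0) h1 m) (Jfun_nonneg n hn l)
  · have hJ : Jfun n l = 0 := by
      unfold Jfun
      rw [if_neg]
      rintro ⟨-, h⟩; exact h1 h
    simp [hJ]
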